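/- Let 0 < k < n-1, let m < n, and let AU_{k,n}(q,X) be the almost uniform q-matroid on F_q^n obtained from the uniform q-matroid of rank k by declaring a single k-dimensional subspace X to have rank k-1. If an F_q-linear rank-metric code C ⊆ F_q^{n×m} represents AU_{k,n}(q,X), then m = n-1, dim C = k(n-1), and the minimum rank distance of C is n-k. -/

import Mathlib

open Matrix Module

variable {F : Type*} [Field F]

/-- Column space of a matrix: the span of its columns. -/
def colSpace {n m : ℕ} (M : Matrix (Fin n) (Fin m) F) : Submodule F (Fin n → F) :=
  Submodule.span F (Set.range Mᵀ)

lemma colSpace_le_iff {n m : ℕ} (M : Matrix (Fin n) (Fin m) F) (U : Submodule F (Fin n → F)) :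
    colSpace M ≤ U ↔ ∀ j, Mᵀ j ∈ U := by
  rw [colSpace, Submodule.span_le]
  exact ⟨fun h j => h ⟨j, rfl⟩, fun h _ ⟨j, hj⟩ => hj ▸ h j⟩

/-- `C(U)`: the codewords of `C` whose column space is contained in `U`. -/
def codeCU {n m : ℕ} (C : Submodule F (Matrix (Fin n) (Fin m) F))
    (U : Submodule F (Fin n → F)) : Submodule F (Matrix (Fin n) (Fin m) F) where
  carrier := {M | M ∈ C ∧ colSpace M ≤ U}
  add_mem' := by
    rintro a b ⟨haC, ha⟩ ⟨hbC, hb⟩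
    refine ⟨C.add_mem haC hbC, (colSpace_le_iff _ _).2 fun j => ?_⟩
    have h := U.add_mem ((colSpace_le_iff a U).1 ha j) ((colSpace_le_iff b U).1 hb j)
    exact h
  zero_mem' := by
    exact ⟨C.zero_mem, (colSpace_le_iff _ _).2 fun j => U.zero_mem⟩
  smul_mem' := by
    rintro c a ⟨haC, ha⟩
    refine ⟨C.smul_mem c haC, (colSpace_le_iff _ _).2 fun j => ?_⟩
    have h := U.smul_mem c ((colSpace_le_iff a U).1 ha j)
    exact h

/-- Orthogonal complement with respect to the standard (dot-product) bilinear form. -/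
def perp {n : ℕ} (U : Submodule F (Fin n → F)) : Submodule F (Fin n → F) where
  carrier := {v | ∀ u ∈ U, v ⬝ᵥ u = 0}
  add_mem' := by
    intro a b ha hb u hu
    rw [add_dotProduct, ha u hu, hb u hu, add_zero]
  zero_mem' := by
    intro u hu
    rw [zero_dotProduct]
  smul_mem' := by
    intro c a ha u hu
    rw [smul_dotProduct, ha u hu, smul_zero]

lemma mem_perp {n : ℕ} {U : Submodule F (Fin n → F)} {v : Fin n → F} :
    v ∈ perp U ↔ ∀ u ∈ U, v ⬝ᵥ u = 0 := Iff.rfl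

lemma le_perp_perp {n : ℕ} (U : Submodule F (Fin n → F)) : U ≤ perp (perp U) := by
  intro u hu v hv
  rw [dotProduct_comm]
  exact hv u hu

/-- the dot-product pairing as a linear map to the dual -/
noncomputable def dotDual (n : ℕ) : (Fin n → F) →ₗ[F] Module.Dual F (Fin n → F) where
  toFun v :=
    { toFun := fun u => v ⬝ᵥ u
      map_add' := fun a b => dotProduct_add v a b
      map_smul' := fun c a => dotProduct_smul c v a }
  map_add' a b := by ext u; simp [add_dotProduct]
  map_smul' c a := by ext u; simp [smul_dotProduct]

lemma dotDual_bijective (n : ℕ) : Function.Bijective (dotDual (F := F) n) := by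
  have hinj : Function.Injective (dotDual (F := F) n) := by
    rw [injective_iff_map_eq_zero]
    intro v hv
    apply dotProduct_eq_zero
    intro w
    exact congrFun (congrArg DFunLike.coe hv) w
  refine ⟨hinj, ?_⟩
  have := LinearMap.injective_iff_surjective_of_finrank_eq_finrank
    (f := dotDual (F := F) n) (Subspace.dual_finrank_eq).symm
  exact this.mp hinj

lemma perp_eq_comap {n : ℕ} (U : Submodule F (Fin n → F)) :
    perp U = U.dualAnnihilator.comap (dotDual n) := by
  ext v
  simp [mem_perp, Submodule.mem_dualAnnihilator, dotDual]

lemma finrank_perp_add {n : ℕ} (U : Submodule F (Fin n → F)) :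
    finrank F (perp U) + finrank F U = n := by
  let e : (Fin n → F) ≃ₗ[F] Module.Dual F (Fin n → F) :=
    LinearEquiv.ofBijective _ (dotDual_bijective n)
  have h1 : perp U = U.dualAnnihilator.comap (e : (Fin n → F) →ₗ[F] Module.Dual F (Fin n → F)) :=
    perp_eq_comap U
  rw [h1, Submodule.comap_equiv_eq_map_symm]
  rw [LinearEquiv.finrank_map_eq e.symm U.dualAnnihilator]
  have h2 : finrank F U.dualAnnihilator = finrank F ((Fin n → F) ⧸ U) :=
    (LinearEquiv.finrank_eq (Subspace.quotEquivAnnihilator U)).symm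
  rw [h2, Submodule.finrank_quotient_add_finrank, Module.finrank_fin_fun]



lemma colSpace_eq_range {n m : ℕ} (M : Matrix (Fin n) (Fin m) F) :
    colSpace M = LinearMap.range M.mulVecLin := (Matrix.range_mulVecLin M).symm

lemma rank_eq_colSpace {n m : ℕ} (M : Matrix (Fin n) (Fin m) F) :
    M.rank = Module.finrank F (colSpace M) := by
  rw [colSpace_eq_range]; rfl

lemma mem_codeCU {n m : ℕ} {C : Submodule F (Matrix (Fin n) (Fin m) F)}
    {U : Submodule F (Fin n → F)} {M : Matrix (Fin n) (Fin m) F} :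
    M ∈ codeCU C U ↔ M ∈ C ∧ colSpace M ≤ U := Iff.rfl

lemma codeCU_mono {n m : ℕ} (C : Submodule F (Matrix (Fin n) (Fin m) F))
    {U V : Submodule F (Fin n → F)} (h : U ≤ V) : codeCU C U ≤ codeCU C V :=
  fun _ hM => ⟨hM.1, hM.2.trans h⟩

lemma codeCU_bot {n m : ℕ} (C : Submodule F (Matrix (Fin n) (Fin m) F)) :
    codeCU C ⊥ = ⊥ := by
  rw [eq_bot_iff]
  rintro M ⟨-, hM⟩
  have := (colSpace_le_iff M ⊥).1 hM
  have hM0 : M = 0 := by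
    ext i j
    have := this j
    rw [Submodule.mem_bot] at this
    exact congrFun this i
  simp [hM0, Submodule.mem_bot]

/-- The minimum rank distance of a matrix code. -/
noncomputable def minRankDist {n m : ℕ} (C : Submodule F (Matrix (Fin n) (Fin m) F)) : ℕ :=
  sInf {r : ℕ | ∃ M ∈ C, M ≠ 0 ∧ M.rank = r}

/-- The rank function of the q-polymatroid associated to a matrix rank-metric code. -/
noncomputable def rhoCode {n m : ℕ} (C : Submodule F (Matrix (Fin n) (Fin m) F))
    (U : Submodule F (Fin n → F)) : ℚ :=
  ((Module.finrank F C : ℚ) - (Module.finrank F (codeCU C (perp U)) : ℚ)) / (m : ℚ)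

open scoped Classical in
/-- a matrix rank-metric code with `m < n` representing the almost uniform
q-matroid `AU_{k,n}(q,X)` must have `m = n-1`, dimension `k(n-1)`, and minimum rank
distance `n-k`. -/
theorem almost_uniform_parameters [Fintype F] {n m k : ℕ}
    (hk0 : 0 < k) (hk : k < n - 1) (hm0 : 0 < m) (hmn : m < n)
    (X : Submodule F (Fin n → F)) (hX : Module.finrank F X = k)
    (C : Submodule F (Matrix (Fin n) (Fin m) F))
    (hrep : ∀ U : Submodule F (Fin n → F),
      rhoCode C U = if U = X then ((k - 1 : ℕ) : ℚ)
        else ((min (Module.finrank F U) k : ℕ) : ℚ)) :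
    m = n - 1 ∧ Module.finrank F C = k * (n - 1) ∧ minRankDist C = n - k := by
  classical
  obtain ⟨n', rfl⟩ : ∃ n', n = n' + 1 := ⟨n - 1, by omega⟩
  have hkn : k + 2 ≤ n' + 1 := by omega
  have hmQ : (m : ℚ) ≠ 0 := Nat.cast_ne_zero.mpr hm0.ne'
  -- dimension of C
  have htopX : (⊤ : Submodule F (Fin (n' + 1) → F)) ≠ X := by
    intro h
    rw [← h, finrank_top, Module.finrank_fin_fun] at hX
    omega
  have hperptop : perp (⊤ : Submodule F (Fin (n' + 1) → F)) = ⊥ := by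
    have h := finrank_perp_add (⊤ : Submodule F (Fin (n' + 1) → F))
    rw [finrank_top, Module.finrank_fin_fun] at h
    exact Submodule.finrank_eq_zero.mp (by omega)
  have hN : Module.finrank F C = k * m := by
    have h := hrep ⊤
    rw [if_neg htopX, rhoCode, hperptop, codeCU_bot, finrank_bot, finrank_top,
      Module.finrank_fin_fun] at h
    have hmin : min (n' + 1) k = k := min_eq_right (by omega)
    rw [hmin, div_eq_iff hmQ] at h
    have : (Module.finrank F C : ℚ) = ((k * m : ℕ) : ℚ) := by push_cast at h ⊢; linarith
    exact_mod_cast this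
  -- key vanishing lemma
  have key : ∀ U : Submodule F (Fin (n' + 1) → F), U ≠ X → k ≤ Module.finrank F U →
      codeCU C (perp U) = ⊥ := by
    intro U hUX hUk
    have h := hrep U
    rw [if_neg hUX, min_eq_right hUk, rhoCode, div_eq_iff hmQ, hN] at h
    have : (Module.finrank F (codeCU C (perp U)) : ℚ) = 0 := by push_cast at h ⊢; linarith
    exact Submodule.finrank_eq_zero.mp (by exact_mod_cast this)
  have key2 : ∀ W : Submodule F (Fin (n' + 1) → F), perp W ≠ X →
      Module.finrank F W + k ≤ n' + 1 → codeCU C W = ⊥ := by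
    intro W hWX hWk
    have hp := finrank_perp_add W
    have h := key (perp W) hWX (by omega)
    exact le_bot_iff.mp ((codeCU_mono C (le_perp_perp W)).trans h.le)
  have keysmall : ∀ W : Submodule F (Fin (n' + 1) → F),
      Module.finrank F W + k < n' + 1 → codeCU C W = ⊥ := by
    intro W hW
    refine key2 W (fun h => ?_) (by omega)
    have hp := finrank_perp_add W
    rw [h, hX] at hp
    omega
  -- lower bound on ranks
  have hrankge : ∀ M ∈ C, M ≠ 0 → n' + 1 - k ≤ M.rank := by
    intro M hM hM0
    by_contra hcon
    push_neg at hcon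
    have hW : codeCU C (colSpace M) = ⊥ :=
      keysmall _ (by rw [← rank_eq_colSpace]; omega)
    have : M ∈ codeCU C (colSpace M) := ⟨hM, le_rfl⟩
    rw [hW, Submodule.mem_bot] at this
    exact hM0 this
  -- perp X
  have hpX : Module.finrank F (perp X) = n' + 1 - k := by
    have := finrank_perp_add X
    omega
  have hXcode : Module.finrank F (codeCU C (perp X)) = m := by
    have h := hrep X
    rw [if_pos rfl, rhoCode, div_eq_iff hmQ, hN, Nat.cast_sub (by omega : 1 ≤ k)] at h
    have : (Module.finrank F (codeCU C (perp X)) : ℚ) = (m : ℕ) := by push_cast at h ⊢; linarith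
    exact_mod_cast this
  obtain ⟨M₀, hM₀mem, hM₀ne⟩ : ∃ M₀, M₀ ∈ codeCU C (perp X) ∧ M₀ ≠ 0 := by
    apply Submodule.exists_mem_ne_zero_of_ne_bot
    intro h
    rw [h, finrank_bot] at hXcode
    omega
  have hrankM₀ : M₀.rank = n' + 1 - k := by
    refine le_antisymm ?_ (hrankge M₀ hM₀mem.1 hM₀ne)
    rw [rank_eq_colSpace, ← hpX]
    exact Submodule.finrank_mono hM₀mem.2
  have hmnk : n' + 1 - k ≤ m := hrankM₀ ▸ Matrix.rank_le_width M₀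
  -- minimum rank distance
  have hdist : minRankDist C = n' + 1 - k := by
    refine le_antisymm (Nat.sInf_le ⟨M₀, hM₀mem.1, hM₀ne, hrankM₀⟩) ?_
    refine le_csInf ⟨_, M₀, hM₀mem.1, hM₀ne, hrankM₀⟩ ?_
    rintro r ⟨M, hM, hMne, rfl⟩
    exact hrankge M hM hMne
  -- choose e ∉ perp X and a nonzero coordinate
  obtain ⟨e, he⟩ : ∃ e, e ∉ perp X := by
    by_contra h
    push_neg at h
    have : perp X = ⊤ := Submodule.eq_top_iff'.mpr h
    rw [this, finrank_top, Module.finrank_fin_fun] at hpX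
    omega
  have he0 : e ≠ 0 := fun h => he (h ▸ (perp X).zero_mem)
  obtain ⟨i, hi⟩ : ∃ i, e i ≠ 0 := by
    by_contra h
    push_neg at h
    exact he0 (funext h)
  -- the puncturing matrix
  set P : Matrix (Fin n') (Fin (n' + 1)) F := fun j' l =>
    (if l = i.succAbove j' then e i else 0) - (if l = i then e (i.succAbove j') else 0) with hP
  have hPmul : ∀ v : Fin (n' + 1) → F, ∀ j',
      P.mulVec v j' = e i * v (i.succAbove j') - e (i.succAbove j') * v i := by
    intro v j'
    simp only [hP, mulVec, dotProduct, sub_mul, ite_mul, zero_mul,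
      Finset.sum_sub_distrib, Finset.sum_ite_eq', Finset.mem_univ, if_pos]
  have hkerP : ∀ v : Fin (n' + 1) → F, P.mulVec v = 0 → v ∈ Submodule.span F {e} := by
    intro v hv
    have hv' : ∀ j', e i * v (i.succAbove j') = e (i.succAbove j') * v i := by
      intro j'
      have h0 := congrFun hv j'
      rw [hPmul v j', Pi.zero_apply, sub_eq_zero] at h0
      exact h0
    refine Submodule.mem_span_singleton.mpr ⟨v i * (e i)⁻¹, funext fun l => ?_⟩
    rcases eq_or_ne l i with rfl | hl
    · rw [Pi.smul_apply, smul_eq_mul, mul_assoc, inv_mul_cancel₀ hi, mul_one]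
    · obtain ⟨j', rfl⟩ := Fin.exists_succAbove_eq hl
      have h := hv' j'
      have hrw : v (i.succAbove j') = (e i)⁻¹ * (e i * v (i.succAbove j')) := by
        rw [inv_mul_cancel_left₀ hi]
      rw [Pi.smul_apply, smul_eq_mul, hrw, h]
      ring
  -- rank of punctured codewords
  have rankPM : ∀ M ∈ C, M ≠ 0 → n' + 1 - k ≤ (P * M).rank := by
    intro M hM hM0
    set W := colSpace M with hWdef
    have hcol : colSpace (P * M) = W.map P.mulVecLin := by
      rw [colSpace_eq_range, hWdef, colSpace_eq_range, Matrix.mulVecLin_mul, LinearMap.range_comp]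
    set g := P.mulVecLin.domRestrict W with hg
    have hrg : LinearMap.range g = W.map P.mulVecLin := LinearMap.range_domRestrict W P.mulVecLin
    have hdimW : n' + 1 - k ≤ Module.finrank F W := by
      rw [hWdef, ← rank_eq_colSpace]
      exact hrankge M hM hM0
    have hrnull := LinearMap.finrank_range_add_finrank_ker g
    have hrkPM : (P * M).rank = Module.finrank F (LinearMap.range g) := by
      rw [rank_eq_colSpace, hcol, hrg]
    have hker1 : Module.finrank F (LinearMap.ker g) ≤ 1 := by
      have hsub : (LinearMap.ker g).map W.subtype ≤ Submodule.span F {e} := by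
        rintro x ⟨y, hy, rfl⟩
        apply hkerP
        have : g y = 0 := hy
        exact this
      calc Module.finrank F (LinearMap.ker g)
          = Module.finrank F ((LinearMap.ker g).map W.subtype) :=
            (Submodule.finrank_map_subtype_eq W _).symm
        _ ≤ Module.finrank F (Submodule.span F {e}) := Submodule.finrank_mono hsub
        _ = 1 := finrank_span_singleton he0
    rcases Nat.lt_or_ge (n' + 1 - k) (Module.finrank F W) with hcase | hcase
    · omega
    · -- finrank W = n' + 1 - k; show e ∉ W, hence ker g = ⊥
      have hWeq : Module.finrank F W = n' + 1 - k := le_antisymm hcase hdimW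
      have heW : e ∉ W := by
        intro heW
        have hpne : perp W ≠ X := by
          intro h
          exact he (h ▸ le_perp_perp W heW)
        have hbot : codeCU C W = ⊥ := key2 W hpne (by omega)
        have : M ∈ codeCU C W := ⟨hM, le_rfl⟩
        rw [hbot, Submodule.mem_bot] at this
        exact hM0 this
      have hker0 : LinearMap.ker g = ⊥ := by
        rw [eq_bot_iff]
        rintro x hx
        have hx' : (x : Fin (n' + 1) → F) ∈ Submodule.span F {e} := by
          apply hkerP
          exact hx
        obtain ⟨c, hc⟩ := Submodule.mem_span_singleton.mp hx'
        rcases eq_or_ne c 0 with rfl | hc0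
        · have : (x : Fin (n' + 1) → F) = 0 := by rw [← hc, zero_smul]
          simpa [Submodule.mem_bot] using Subtype.ext this
        · exfalso
          apply heW
          have : e = c⁻¹ • (x : Fin (n' + 1) → F) := by
            rw [← hc, smul_smul, inv_mul_cancel₀ hc0, one_smul]
          rw [this]
          exact W.smul_mem _ x.2
      rw [hker0, finrank_bot] at hrnull
      omega
  have hinjP : ∀ M ∈ C, P * M = 0 → M = 0 := by
    intro M hM h0
    by_contra hne
    have := rankPM M hM hne
    rw [h0, Matrix.rank_zero] at this
    omega
  -- the punctured code
  set L : Matrix (Fin (n' + 1)) (Fin m) F →ₗ[F] Matrix (Fin n') (Fin m) F :=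
    { toFun := fun M => P * M
      map_add' := fun a b => Matrix.mul_add P a b
      map_smul' := fun c a => (Matrix.mul_smul P c a).trans rfl } with hL
  set D := C.map L with hD
  have hDdim : Module.finrank F D = k * m := by
    have hkerL : LinearMap.ker (L.domRestrict C) = ⊥ := by
      rw [eq_bot_iff]
      rintro x hx
      have : P * (x : Matrix (Fin (n' + 1)) (Fin m) F) = 0 := hx
      have hx0 : (x : Matrix (Fin (n' + 1)) (Fin m) F) = 0 := hinjP _ x.2 this
      simpa [Submodule.mem_bot] using Subtype.ext hx0
    have h := LinearMap.finrank_range_add_finrank_ker (L.domRestrict C)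
    rw [hkerL, finrank_bot, LinearMap.range_domRestrict, ← hD, hN] at h
    omega
  -- drop columns
  set m' := m - (n' + 1 - k - 1) with hm'
  have hm'le : m' ≤ m := Nat.sub_le _ _
  set Ψ : Matrix (Fin n') (Fin m) F →ₗ[F] Matrix (Fin n') (Fin m') F :=
    { toFun := fun A => A.submatrix id (Fin.castLE hm'le)
      map_add' := fun a b => rfl
      map_smul' := fun c a => rfl } with hΨ
  have hΨinj : ∀ A ∈ D, Ψ A = 0 → A = 0 := by
    rintro A ⟨M, hM, rfl⟩ h0
    have hLM : L M = P * M := rfl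
    rcases eq_or_ne M 0 with rfl | hMne
    · rw [hLM, Matrix.mul_zero]
    exfalso
    have hrk := rankPM M hM hMne
    have hcols : ∀ j : Fin m, (j : ℕ) < m' → (P * M)ᵀ j = 0 := by
      intro j hj
      funext r
      have h1 : (P * M) r (Fin.castLE hm'le ⟨(j : ℕ), hj⟩) = 0 :=
        congrFun (congrFun h0 r) ⟨(j : ℕ), hj⟩
      have h2 : Fin.castLE hm'le ⟨(j : ℕ), hj⟩ = j := rfl
      rw [h2] at h1
      simpa using h1
    set v : Fin (n' + 1 - k - 1) → (Fin n' → F) := fun t => (P * M)ᵀ ⟨m' + (t : ℕ), by omega⟩ with hv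
    have hspan : colSpace (P * M) ≤ Submodule.span F (Set.range v) := by
      rw [colSpace_le_iff]
      intro j
      rcases Nat.lt_or_ge (j : ℕ) m' with hj | hj
      · rw [hcols j hj]; exact Submodule.zero_mem _
      · apply Submodule.subset_span
        have hjm : (j : ℕ) < m := j.isLt
        refine ⟨⟨(j : ℕ) - m', by omega⟩, congrArg (P * M)ᵀ ?_⟩
        exact Fin.ext (show m' + ((j : ℕ) - m') = (j : ℕ) by omega)
    have hle : (P * M).rank ≤ n' + 1 - k - 1 := by
      rw [rank_eq_colSpace]
      calc Module.finrank F (colSpace (P * M))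
          ≤ Module.finrank F (Submodule.span F (Set.range v)) := Submodule.finrank_mono hspan
        _ ≤ (Set.range v).toFinset.card := finrank_span_le_card _
        _ ≤ n' + 1 - k - 1 := by
            rw [Set.toFinset_range]
            exact Finset.card_image_le.trans (le_of_eq (by simp))
    omega
  have hDle : Module.finrank F D ≤ n' * m' := by
    have hinj : Function.Injective (Ψ.domRestrict D) := by
      rw [← LinearMap.ker_eq_bot, eq_bot_iff]
      rintro x hx
      have : Ψ (x : Matrix (Fin n') (Fin m) F) = 0 := hx
      have hx0 : (x : Matrix (Fin n') (Fin m) F) = 0 := hΨinj _ x.2 this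
      simpa [Submodule.mem_bot] using Subtype.ext hx0
    have := LinearMap.finrank_le_finrank_of_injective hinj
    rwa [Module.finrank_matrix, Fintype.card_fin, Fintype.card_fin,
      Module.finrank_self, mul_one] at this
  rw [hDdim] at hDle
  -- final arithmetic
  obtain ⟨c, hc⟩ : ∃ c, n' = k + 1 + c := ⟨n' - k - 1, by omega⟩
  have hms : m = m' + (c + 1) := by omega
  have hks : k ≤ m' := by
    have h1 : k * (m' + (c + 1)) ≤ (k + 1 + c) * m' := by rw [← hms, ← hc]; exact hDle
    have h2 : k * m' + k * (c + 1) ≤ k * m' + (1 + c) * m' := by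
      calc k * m' + k * (c + 1) = k * (m' + (c + 1)) := by ring
        _ ≤ (k + 1 + c) * m' := h1
        _ = k * m' + (1 + c) * m' := by ring
    have h3 : (c + 1) * k ≤ (c + 1) * m' := by
      have h4 := Nat.add_le_add_iff_left.mp h2
      calc (c + 1) * k = k * (c + 1) := Nat.mul_comm _ _
        _ ≤ (1 + c) * m' := h4
        _ = (c + 1) * m' := by ring
    exact Nat.le_of_mul_le_mul_left h3 (Nat.succ_pos c)
  have hmfin : m = n' := by omega
  refine ⟨by omega, ?_, by rw [hdist]⟩
  rw [hN, hmfin]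
  simp
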